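/- If a finite abstract simplicial complex K edge-zips onto a finite abstract simplicial complex L, then the face poset of K zips onto the face poset of L. -/

import Mathlib

universe u

/-- Image of a finite simplex under a vertex map (classical decidable equality). -/
noncomputable def fimage {V W : Type u} (φ : V → W) (σ : Finset V) : Finset W :=
  letI := Classical.decEq W
  σ.image φ

/-- The two-element finite set `{v, w}` (classical decidable equality). -/
noncomputable def pairFinset {V : Type u} (v w : V) : Finset V :=
  letI := Classical.decEq V
  {v, w}

/-- Union of finite sets (classical decidable equality). -/
noncomputable def funion {V : Type u} (σ τ : Finset V) : Finset V :=
  letI := Classical.decEq V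
  σ ∪ τ

/-- A finite abstract simplicial complex: a finite set of nonempty finite subsets of
the vertex set, closed under passing to nonempty subsets. -/
def IsComplex {V : Type u} (K : Set (Finset V)) : Prop :=
  K.Finite ∧ (∀ σ ∈ K, σ.Nonempty) ∧
    ∀ σ ∈ K, ∀ τ : Finset V, τ ⊆ σ → τ.Nonempty → τ ∈ K

/-- The link `lk(σ, K) = {τ ∈ K : τ ∩ σ = ∅ ∧ τ ∪ σ ∈ K}`. -/
def simplicialLink {V : Type u} (K : Set (Finset V)) (σ : Finset V) :
    Set (Finset V) :=
  {τ | τ ∈ K ∧ Disjoint τ σ ∧ funion τ σ ∈ K}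

/-- The simplicial map `K → L` induced by the vertex map `φ`, contracting the edge
`{v, w}`, is an elementary edge-zipping. -/
def IsElemEdgeZip {V W : Type u} (K : Set (Finset V)) (L : Set (Finset W))
    (φ : V → W) (v w : V) : Prop :=
  IsComplex K ∧ IsComplex L ∧
  v ≠ w ∧ φ v = φ w ∧
  (∀ x y : V, φ x = φ y → x = y ∨ (x = v ∧ y = w) ∨ (x = w ∧ y = v)) ∧
  pairFinset v w ∈ K ∧
  (∀ σ ∈ K, fimage φ σ ∈ L) ∧
  L = fimage φ '' K ∧
  simplicialLink K {v} ∩ simplicialLink K {w} = simplicialLink K (pairFinset v w)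

/-- `K` edge-zips onto `L`: a finite sequence of elementary edge-zippings
`K = K₀ → K₁ → ⋯ → Kₙ = L`. -/
inductive EdgeZips : ∀ (V : Type u), Set (Finset V) → ∀ (W : Type u), Set (Finset W) →
    Prop where
  | refl (V : Type u) (K : Set (Finset V)) : EdgeZips V K V K
  | step {V W X : Type u} {K : Set (Finset V)} {L : Set (Finset W)} {M : Set (Finset X)}
      (hKL : EdgeZips V K W L) (φ : W → X) (v w : W)
      (h : IsElemEdgeZip L M φ v w) : EdgeZips V K X M

/-- `f : α → β` is the elementary zipping of `α` along `p`, where `p` covers the two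
incomparable elements `q` and `r`. -/
def IsElementaryZipping {α β : Type u} [PartialOrder α] [PartialOrder β]
    (f : α → β) (p q r : α) : Prop :=
  ¬q ≤ r ∧ ¬r ≤ q ∧ q ⋖ p ∧ r ⋖ p ∧
  (∀ s : α, s < p → s ≠ q → s ≠ r → s < q ∧ s < r) ∧
  (∀ s : α, q < s → r < s → p ≤ s) ∧
  Monotone f ∧ Function.Surjective f ∧
  (∀ x y : α, f x = f y ↔ x = y ∨ (x ∈ ({p, q, r} : Set α) ∧ y ∈ ({p, q, r} : Set α))) ∧
  (∀ x y : α, x ∉ ({p, q, r} : Set α) → y ∉ ({p, q, r} : Set α) → (f x ≤ f y ↔ x ≤ y)) ∧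
  (∀ x : α, x ∉ ({p, q, r} : Set α) → (f x ≤ f p ↔ x ≤ p ∨ x ≤ q ∨ x ≤ r)) ∧
  (∀ y : α, y ∉ ({p, q, r} : Set α) → (f p ≤ f y ↔ p ≤ y ∨ q ≤ y ∨ r ≤ y))

/-- `ZipSeq α β f` holds when `f` is the composite of a finite sequence of elementary
zippings `α = P₀ → P₁ → ⋯ → Pₙ = β`. -/
inductive ZipSeq : ∀ (α : Type u) [PartialOrder α] (β : Type u) [PartialOrder β],
    (α → β) → Prop where
  | refl (α : Type u) [PartialOrder α] : ZipSeq α α id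
  | step {α β γ : Type u} [PartialOrder α] [PartialOrder β] [PartialOrder γ]
      {g : α → β} {h : β → γ} (p q r : β)
      (hg : ZipSeq α β g) (hh : IsElementaryZipping h p q r) : ZipSeq α γ (h ∘ g)

/-- A poset `α` zips onto a poset `β` if some finite sequence of elementary zippings
starting at `α` ends at a poset order-isomorphic to `β`. -/
def ZipsOnto (α : Type u) [PartialOrder α] (β : Type u) [PartialOrder β] : Prop :=
  ∃ (γ : Type u) (_ : PartialOrder γ) (f : α → γ), ZipSeq α γ f ∧ Nonempty (γ ≃o β)

namespace FPZ

theorem elemZip_comp_iso {α β γ : Type u} [PartialOrder α] [PartialOrder β]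
    [PartialOrder γ] (e : α ≃o β) {h : β → γ} {p q r : β}
    (hz : IsElementaryZipping h p q r) :
    IsElementaryZipping (h ∘ e) (e.symm p) (e.symm q) (e.symm r) := by
  obtain ⟨h1, h2, h3, h4, h5, h6, h7, h8, h9, h10, h11, h12⟩ := hz
  have happ0 : ∀ x : β, e (e.symm x) = x := fun x => e.apply_symm_apply x
  have heq : ∀ (x : α) (y : β), x = e.symm y ↔ e x = y := fun x y =>
    ⟨fun h => by rw [h, happ0], fun h => by rw [← h, e.symm_apply_apply]⟩
  have hmem : ∀ x : α, x ∈ ({e.symm p, e.symm q, e.symm r} : Set α) ↔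
      (e x ∈ ({p, q, r} : Set β)) := by
    intro x
    simp only [Set.mem_insert_iff, Set.mem_singleton_iff, heq]
  have hlt : ∀ x y : α, x < y ↔ e x < e y := fun x y => (e.lt_iff_lt).symm
  have hle : ∀ x y : α, x ≤ y ↔ e x ≤ e y := fun x y => (e.le_iff_le).symm
  have happ : ∀ x : β, e (e.symm x) = x := fun x => e.apply_symm_apply x
  have hcov : ∀ x y : β, x ⋖ y → e.symm x ⋖ e.symm y := by
    intro x y hxy
    constructor
    · rw [hlt, happ, happ]; exact hxy.1
    · intro c hc1 hc2
      rw [hlt, happ] at hc1 hc2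
      exact hxy.2 hc1 hc2
  refine ⟨?_, ?_, hcov _ _ h3, hcov _ _ h4, ?_, ?_, h7.comp e.monotone, h8.comp e.surjective,
    ?_, ?_, ?_, ?_⟩
  · rw [hle, happ, happ]; exact h1
  · rw [hle, happ, happ]; exact h2
  · intro s hs hsq hsr
    rw [hlt, happ] at hs
    have := h5 (e s) hs (fun hc => hsq (by rw [← hc, e.symm_apply_apply]))
      (fun hc => hsr (by rw [← hc, e.symm_apply_apply]))
    constructor
    · rw [hlt, happ]; exact this.1
    · rw [hlt, happ]; exact this.2
  · intro s hs1 hs2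
    rw [hlt, happ] at hs1 hs2
    rw [hle, happ]
    exact h6 (e s) hs1 hs2
  · intro x y
    rw [hmem, hmem]
    simp only [Function.comp_apply]
    rw [h9 (e x) (e y), e.injective.eq_iff]
  · intro x y hx hy
    rw [hmem] at hx hy
    simp only [Function.comp_apply]
    rw [h10 (e x) (e y) hx hy, ← hle]
  · intro x hx
    rw [hmem] at hx
    simp only [Function.comp_apply]
    rw [happ, h11 (e x) hx]
    simp only [hle, happ]
  · intro y hy
    rw [hmem] at hy
    simp only [Function.comp_apply]
    rw [happ, h12 (e y) hy]
    simp only [hle, happ]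

theorem zipSeq_trans {α : Type u} [PartialOrder α] :
    ∀ {β γ : Type u} [PartialOrder β] [PartialOrder γ] {g : β → γ},
      ZipSeq β γ g → ∀ {f : α → β}, ZipSeq α β f → ZipSeq α γ (g ∘ f) := by
  intro β γ _ _ g hg
  induction hg with
  | refl => intro f hf; simpa using hf
  | step p q r hg hh ih =>
      intro f hf
      have := ZipSeq.step p q r (ih hf) hh
      simpa [Function.comp_assoc] using this

theorem zipSeq_precomp_iso {β : Type u} [PartialOrder β] :
    ∀ {δ : Type u} [PartialOrder δ] {g : β → δ}, ZipSeq β δ g →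
      ∀ {α : Type u} [PartialOrder α] (e : α ≃o β),
      ∃ (δ' : Type u) (_ : PartialOrder δ') (g' : α → δ'),
        ZipSeq α δ' g' ∧ Nonempty (δ' ≃o δ) := by
  intro δ _ g hg
  induction hg with
  | refl => intro α _ e; exact ⟨α, inferInstance, id, ZipSeq.refl α, ⟨e⟩⟩
  | step p q r hg0 hh ih =>
      intro α _ e
      obtain ⟨δ₀', pδ₀', g₀', hz, ⟨e₀⟩⟩ := ih e
      exact ⟨_, inferInstance, _,
        ZipSeq.step (e₀.symm p) (e₀.symm q) (e₀.symm r) hz (elemZip_comp_iso e₀ hh),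
        ⟨OrderIso.refl _⟩⟩

theorem zipsOnto_of_iso {α β : Type u} [PartialOrder α] [PartialOrder β]
    (e : α ≃o β) : ZipsOnto α β :=
  ⟨α, inferInstance, id, ZipSeq.refl α, ⟨e⟩⟩

theorem zipsOnto_trans {α β γ : Type u} [PartialOrder α] [PartialOrder β]
    [PartialOrder γ] (h1 : ZipsOnto α β) (h2 : ZipsOnto β γ) : ZipsOnto α γ := by
  obtain ⟨γ₁, p₁, f₁, hz₁, ⟨e₁⟩⟩ := h1
  obtain ⟨γ₂, p₂, f₂, hz₂, ⟨e₂⟩⟩ := h2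
  obtain ⟨δ', pδ', g', hz', ⟨e'⟩⟩ := zipSeq_precomp_iso hz₂ e₁
  exact ⟨δ', pδ', g' ∘ f₁, zipSeq_trans hz' hz₁, ⟨e'.trans e₂⟩⟩

theorem zipsOnto_of_elem {α β : Type u} [PartialOrder α] [PartialOrder β]
    {h : α → β} {p q r : α} (hz : IsElementaryZipping h p q r) : ZipsOnto α β := by
  refine ⟨β, inferInstance, h ∘ id, ZipSeq.step p q r (ZipSeq.refl α) hz, ⟨OrderIso.refl β⟩⟩

end FPZ

noncomputable section
namespace FPZ

attribute [local instance] Classical.propDecidable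

variable {V : Type u}

/-- `σ` is one of the two deleted representatives of an already-zipped double face. -/
def removed (v w : V) (A : Finset (Finset V)) (σ : Finset V) : Prop :=
  ∃ p ∈ A, σ = p.erase w ∨ σ = p.erase v

/-- Carrier of the intermediate poset after zipping the doubles in `A`. -/
def Car (K : Set (Finset V)) (v w : V) (A : Finset (Finset V)) : Set (Finset V) :=
  {σ | σ ∈ K ∧ ¬ removed v w A σ}

/-- The equivalence class of `σ` after zipping the doubles in `A`. -/
def cls (v w : V) (A : Finset (Finset V)) (σ : Finset V) : Set (Finset V) :=
  if σ ∈ A then {σ, σ.erase w, σ.erase v} else {σ}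

/-- The order relation on the intermediate poset. -/
def leA (v w : V) (A : Finset (Finset V)) (σ τ : Finset V) : Prop :=
  ∃ σ' ∈ cls v w A σ, ∃ τ' ∈ cls v w A τ, σ' ⊆ τ'

/-- The hypotheses on the family `A` of zipped doubles. -/
structure Good (K : Set (Finset V)) (v w : V) (A : Finset (Finset V)) : Prop where
  cpx : IsComplex K
  ne : v ≠ w
  mem : ∀ p ∈ A, p ∈ K ∧ v ∈ p ∧ w ∈ p
  dc : ∀ p ∈ A, ∀ p' ∈ K, v ∈ p' → w ∈ p' → p' ⊆ p → p' ∈ A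

theorem cls_of_mem {v w : V} {A : Finset (Finset V)} {σ : Finset V} (h : σ ∈ A) :
    cls v w A σ = {σ, σ.erase w, σ.erase v} := if_pos h

theorem cls_of_not_mem {v w : V} {A : Finset (Finset V)} {σ : Finset V} (h : σ ∉ A) :
    cls v w A σ = {σ} := if_neg h

theorem self_mem_cls {v w : V} {A : Finset (Finset V)} {σ : Finset V} :
    σ ∈ cls v w A σ := by
  unfold cls; split <;> simp

theorem mem_cls_cases {v w : V} {A : Finset (Finset V)} {σ τ' : Finset V}
    (h : τ' ∈ cls v w A σ) :
    τ' = σ ∨ (σ ∈ A ∧ (τ' = σ.erase w ∨ τ' = σ.erase v)) := by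
  unfold cls at h
  split at h
  · simp only [Set.mem_insert_iff, Set.mem_singleton_iff] at h
    rcases h with h | h | h
    · exact Or.inl h
    · exact Or.inr ⟨‹_›, Or.inl h⟩
    · exact Or.inr ⟨‹_›, Or.inr h⟩
  · exact Or.inl (by simpa using h)

theorem cls_subset_self {v w : V} {A : Finset (Finset V)} {σ τ' : Finset V}
    (h : τ' ∈ cls v w A σ) : τ' ⊆ σ := by
  rcases mem_cls_cases h with rfl | ⟨-, rfl | rfl⟩
  · exact Finset.Subset.refl _
  · exact Finset.erase_subset _ _
  · exact Finset.erase_subset _ _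

theorem mem_cls_of_ne {v w : V} {A : Finset (Finset V)} {σ τ' : Finset V}
    (h : τ' ∈ cls v w A σ) {x : V} (hx : x ∈ σ) (hxv : x ≠ v) (hxw : x ≠ w) :
    x ∈ τ' := by
  rcases mem_cls_cases h with rfl | ⟨-, rfl | rfl⟩
  · exact hx
  · exact Finset.mem_erase.mpr ⟨hxw, hx⟩
  · exact Finset.mem_erase.mpr ⟨hxv, hx⟩

theorem card_cls {v w : V} {A : Finset (Finset V)} {σ τ' : Finset V}
    (h : τ' ∈ cls v w A σ) : σ.card ≤ τ'.card + 1 := by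
  rcases mem_cls_cases h with rfl | ⟨-, rfl | rfl⟩
  · omega
  · have h2 : σ.card - 1 ≤ (σ.erase w).card := Finset.pred_card_le_card_erase
    omega
  · have h2 : σ.card - 1 ≤ (σ.erase v).card := Finset.pred_card_le_card_erase
    omega

theorem not_removed_double {K : Set (Finset V)} {v w : V} {A : Finset (Finset V)}
    (hG : Good K v w A) {p : Finset V} (hv : v ∈ p) (hw : w ∈ p) :
    ¬ removed v w A p := by
  rintro ⟨p', hp', rfl | rfl⟩
  · exact Finset.notMem_erase w p' hw
  · exact Finset.notMem_erase v p' hv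

theorem mem_A_not_mem_A {K : Set (Finset V)} {v w : V} {A : Finset (Finset V)}
    (hG : Good K v w A) {σ : Finset V} (hvσ : v ∉ σ ∨ w ∉ σ) : σ ∉ A := by
  intro hσ
  obtain ⟨-, hv, hw⟩ := hG.mem σ hσ
  rcases hvσ with h | h
  · exact h hv
  · exact h hw

/-- Key technical lemma: a subset witness below one member of the class of `τ`
can be adjusted to lie below any other member. -/
theorem adjust {K : Set (Finset V)} {v w : V} {A : Finset (Finset V)}
    (hG : Good K v w A) {σ τ σ' τ1 τ2 : Finset V}
    (hσ : σ ∈ Car K v w A) (hτ : τ ∈ K)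
    (hσ' : σ' ∈ cls v w A σ) (hτ1 : τ1 ∈ cls v w A τ) (hτ2 : τ2 ∈ cls v w A τ)
    (hsub : σ' ⊆ τ1) : ∃ σ'' ∈ cls v w A σ, σ'' ⊆ τ2 := by
  by_cases hτA : τ ∈ A
  · obtain ⟨hτK, hvτ, hwτ⟩ := hG.mem τ hτA
    by_cases hσA : σ ∈ A
    · obtain ⟨hσK, hvσ, hwσ⟩ := hG.mem σ hσA
      have hcore : ∀ x ∈ σ, x ≠ v → x ≠ w → x ∈ τ2 := by
        intro x hx hxv hxw
        have hx1 : x ∈ τ1 := hsub (mem_cls_of_ne hσ' hx hxv hxw)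
        exact mem_cls_of_ne hτ2 (cls_subset_self hτ1 hx1) hxv hxw
      rcases mem_cls_cases hτ2 with rfl | ⟨-, rfl | rfl⟩
      · refine ⟨σ, self_mem_cls, fun x hx => ?_⟩
        by_cases hxv : x = v
        · subst hxv; exact hvτ
        by_cases hxw : x = w
        · subst hxw; exact hwτ
        exact cls_subset_self hτ2 (hcore x hx hxv hxw)
      · refine ⟨σ.erase w, ?_, fun x hx => ?_⟩
        · rw [cls_of_mem hσA]; simp
        · obtain ⟨hxw, hx⟩ := Finset.mem_erase.mp hx
          by_cases hxv : x = v
          · subst hxv; exact Finset.mem_erase.mpr ⟨hG.ne, hvτ⟩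
          · exact hcore x hx hxv hxw
      · refine ⟨σ.erase v, ?_, fun x hx => ?_⟩
        · rw [cls_of_mem hσA]; simp
        · obtain ⟨hxv, hx⟩ := Finset.mem_erase.mp hx
          by_cases hxw : x = w
          · subst hxw; exact Finset.mem_erase.mpr ⟨(Ne.symm hG.ne), hwτ⟩
          · exact hcore x hx hxv hxw
    · rw [cls_of_not_mem hσA] at hσ'
      obtain rfl : σ' = σ := by simpa using hσ'
      have hστ : σ' ⊆ τ := hsub.trans (cls_subset_self hτ1)
      have hvn : v ∉ σ' := by
        intro hv
        by_cases hw : w ∈ σ'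
        · exact hσA (hG.dc τ hτA σ' hσ.1 hv hw hστ)
        · have h1 : insert w σ' ⊆ τ := by
            intro x hx
            rcases Finset.mem_insert.mp hx with rfl | hx
            · exact hwτ
            · exact hστ hx
          have h2 : insert w σ' ∈ K :=
            hG.cpx.2.2 τ hτK _ h1 ⟨w, Finset.mem_insert_self w σ'⟩
          have h3 : insert w σ' ∈ A :=
            hG.dc τ hτA _ h2 (Finset.mem_insert_of_mem hv) (Finset.mem_insert_self w σ') h1
          exact hσ.2 ⟨insert w σ', h3, Or.inl (Finset.erase_insert hw).symm⟩
      have hwn : w ∉ σ' := by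
        intro hw
        have h1 : insert v σ' ⊆ τ := by
          intro x hx
          rcases Finset.mem_insert.mp hx with rfl | hx
          · exact hvτ
          · exact hστ hx
        have h2 : insert v σ' ∈ K :=
          hG.cpx.2.2 τ hτK _ h1 ⟨v, Finset.mem_insert_self v σ'⟩
        have h3 : insert v σ' ∈ A :=
          hG.dc τ hτA _ h2 (Finset.mem_insert_self v σ') (Finset.mem_insert_of_mem hw) h1
        exact hσ.2 ⟨insert v σ', h3, Or.inr (Finset.erase_insert hvn).symm⟩
      refine ⟨σ', cls_of_not_mem hσA ▸ rfl, fun x hx => ?_⟩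
      exact mem_cls_of_ne hτ2 (hστ hx) (fun hc => hvn (hc ▸ hx)) (fun hc => hwn (hc ▸ hx))
  · rw [cls_of_not_mem hτA] at hτ1 hτ2
    have e1 : τ1 = τ := by simpa using hτ1
    have e2 : τ2 = τ := by simpa using hτ2
    exact ⟨σ', hσ', e2 ▸ e1 ▸ hsub⟩

/-- One-sided antisymmetry contradiction: a zipped double cannot be mutually
comparable with an unzipped face. -/
theorem antisym_aux {K : Set (Finset V)} {v w : V} {A : Finset (Finset V)}
    (hG : Good K v w A) {σ τ : Finset V}
    (hσ : σ ∈ Car K v w A) (hτ : τ ∈ Car K v w A) (hσA : σ ∈ A) (hτA : τ ∉ A)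
    (h1 : leA v w A σ τ) (h2 : leA v w A τ σ) : False := by
  obtain ⟨hσK, hvσ, hwσ⟩ := hG.mem σ hσA
  obtain ⟨σ', hσ', τ1, hτ1, hs⟩ := h1
  obtain ⟨τ2, hτ2, σ2, hσ2, ht⟩ := h2
  rw [cls_of_not_mem hτA] at hτ1 hτ2
  have e1 : τ1 = τ := by simpa using hτ1
  have e2 : τ2 = τ := by simpa using hτ2
  rw [e1] at hs
  rw [e2] at ht
  have hτσ : τ ⊆ σ := ht.trans (cls_subset_self hσ2)
  -- σ' contains v or w
  have hvw : v ∈ τ ∨ w ∈ τ := by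
    rcases mem_cls_cases hσ' with rfl | ⟨-, rfl | rfl⟩
    · exact Or.inl (hs hvσ)
    · exact Or.inl (hs (Finset.mem_erase.mpr ⟨hG.ne, hvσ⟩))
    · exact Or.inr (hs (Finset.mem_erase.mpr ⟨Ne.symm hG.ne, hwσ⟩))
  by_cases hv : v ∈ τ <;> by_cases hw : w ∈ τ
  · exact hτA (hG.dc σ hσA τ hτ.1 hv hw hτσ)
  · have h1' : insert w τ ⊆ σ := by
      intro x hx
      rcases Finset.mem_insert.mp hx with rfl | hx
      · exact hwσ
      · exact hτσ hx
    have h2' : insert w τ ∈ K :=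
      hG.cpx.2.2 σ hσK _ h1' ⟨w, Finset.mem_insert_self w τ⟩
    have h3' : insert w τ ∈ A :=
      hG.dc σ hσA _ h2' (Finset.mem_insert_of_mem hv) (Finset.mem_insert_self w τ) h1'
    exact hτ.2 ⟨insert w τ, h3', Or.inl (Finset.erase_insert hw).symm⟩
  · have h1' : insert v τ ⊆ σ := by
      intro x hx
      rcases Finset.mem_insert.mp hx with rfl | hx
      · exact hvσ
      · exact hτσ hx
    have h2' : insert v τ ∈ K :=
      hG.cpx.2.2 σ hσK _ h1' ⟨v, Finset.mem_insert_self v τ⟩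
    have h3' : insert v τ ∈ A :=
      hG.dc σ hσA _ h2' (Finset.mem_insert_self v τ) (Finset.mem_insert_of_mem hw) h1'
    exact hτ.2 ⟨insert v τ, h3', Or.inr (Finset.erase_insert hv).symm⟩
  · rcases hvw with h | h
    · exact hv h
    · exact hw h

/-- The intermediate poset structure. -/
def carPO {K : Set (Finset V)} {v w : V} {A : Finset (Finset V)}
    (hG : Good K v w A) : PartialOrder ↥(Car K v w A) where
  le σ τ := leA v w A σ.1 τ.1
  lt σ τ := leA v w A σ.1 τ.1 ∧ ¬ leA v w A τ.1 σ.1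
  lt_iff_le_not_ge _ _ := Iff.rfl
  le_refl σ := ⟨σ.1, self_mem_cls, σ.1, self_mem_cls, Finset.Subset.refl _⟩
  le_trans σ τ υ h1 h2 := by
    obtain ⟨σ', hσ', τ1, hτ1, hs⟩ := h1
    obtain ⟨τ2, hτ2, υ', hυ', ht⟩ := h2
    obtain ⟨σ'', hσ'', hs2⟩ := adjust hG σ.2 τ.2.1 hσ' hτ1 hτ2 hs
    exact ⟨σ'', hσ'', υ', hυ', hs2.trans ht⟩
  le_antisymm σ τ h1 h2 := by
    by_cases hσA : σ.1 ∈ A <;> by_cases hτA : τ.1 ∈ A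
    · -- both doubles: cores are equal
      obtain ⟨-, hvσ, hwσ⟩ := hG.mem σ.1 hσA
      obtain ⟨-, hvτ, hwτ⟩ := hG.mem τ.1 hτA
      obtain ⟨σ', hσ', τ1, hτ1, hs⟩ := h1
      obtain ⟨τ2, hτ2, σ2, hσ2, ht⟩ := h2
      refine Subtype.ext (Finset.ext fun x => ⟨fun hx => ?_, fun hx => ?_⟩)
      · by_cases hxv : x = v
        · subst hxv; exact hvτ
        by_cases hxw : x = w
        · subst hxw; exact hwτ
        exact cls_subset_self hτ1 (hs (mem_cls_of_ne hσ' hx hxv hxw))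
      · by_cases hxv : x = v
        · subst hxv; exact hvσ
        by_cases hxw : x = w
        · subst hxw; exact hwσ
        exact cls_subset_self hσ2 (ht (mem_cls_of_ne hτ2 hx hxv hxw))
    · exact absurd (antisym_aux hG σ.2 τ.2 hσA hτA h1 h2) (fun h => h.elim)
    · exact absurd (antisym_aux hG τ.2 σ.2 hτA hσA h2 h1) (fun h => h.elim)
    · obtain ⟨σ', hσ', τ1, hτ1, hs⟩ := h1
      obtain ⟨τ2, hτ2, σ2, hσ2, ht⟩ := h2
      rw [cls_of_not_mem hσA] at hσ' hσ2
      rw [cls_of_not_mem hτA] at hτ1 hτ2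
      have e1 : σ' = σ.1 := by simpa using hσ'
      have e2 : σ2 = σ.1 := by simpa using hσ2
      have e3 : τ1 = τ.1 := by simpa using hτ1
      have e4 : τ2 = τ.1 := by simpa using hτ2
      rw [e1, e3] at hs
      rw [e2, e4] at ht
      exact Subtype.ext (Finset.Subset.antisymm hs ht)

end FPZ
end

noncomputable section
namespace FPZ

attribute [local instance] Classical.propDecidable

variable {V : Type u}

theorem good_insert {K : Set (Finset V)} {v w : V} {A : Finset (Finset V)}
    (hG : Good K v w A) {p : Finset V} (hpK : p ∈ K) (hpv : v ∈ p) (hpw : w ∈ p)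
    (hmin : ∀ p' ∈ K, v ∈ p' → w ∈ p' → p' ⊆ p → p' ≠ p → p' ∈ A) :
    Good K v w (insert p A) where
  cpx := hG.cpx
  ne := hG.ne
  mem := by
    intro q hq
    rcases Finset.mem_insert.mp hq with hqp | hq
    · rw [hqp]; exact ⟨hpK, hpv, hpw⟩
    · exact hG.mem q hq
  dc := by
    intro q hq p' hp'K hv' hw' hsub
    rcases Finset.mem_insert.mp hq with hqp | hq
    · rw [hqp] at hsub
      by_cases hne : p' = p
      · rw [hne]; exact Finset.mem_insert_self _ _
      · exact Finset.mem_insert_of_mem (hmin p' hp'K hv' hw' hsub hne)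
    · exact Finset.mem_insert_of_mem (hG.dc q hq p' hp'K hv' hw' hsub)

/-- The quotient map collapsing the class of the double `p`. -/
def zmap {K : Set (Finset V)} {v w : V} {A : Finset (Finset V)} {p : Finset V}
    (hpK : p ∈ K) (hnr : ¬ removed v w (insert p A) p)
    (hmem : ∀ σ : ↥(Car K v w A), ¬(σ.1 = p.erase w ∨ σ.1 = p.erase v) →
      σ.1 ∈ Car K v w (insert p A)) :
    ↥(Car K v w A) → ↥(Car K v w (insert p A)) := fun σ =>
  if hc : σ.1 = p.erase w ∨ σ.1 = p.erase v then ⟨p, hpK, hnr⟩ else ⟨σ.1, hmem σ hc⟩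

theorem zmap_pos {K : Set (Finset V)} {v w : V} {A : Finset (Finset V)} {p : Finset V}
    (hpK : p ∈ K) (hnr : ¬ removed v w (insert p A) p)
    (hmem : ∀ σ : ↥(Car K v w A), ¬(σ.1 = p.erase w ∨ σ.1 = p.erase v) →
      σ.1 ∈ Car K v w (insert p A))
    (σ : ↥(Car K v w A)) (hc : σ.1 = p.erase w ∨ σ.1 = p.erase v) :
    (zmap hpK hnr hmem σ).1 = p := by
  unfold zmap; rw [dif_pos hc]

theorem zmap_neg {K : Set (Finset V)} {v w : V} {A : Finset (Finset V)} {p : Finset V}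
    (hpK : p ∈ K) (hnr : ¬ removed v w (insert p A) p)
    (hmem : ∀ σ : ↥(Car K v w A), ¬(σ.1 = p.erase w ∨ σ.1 = p.erase v) →
      σ.1 ∈ Car K v w (insert p A))
    (σ : ↥(Car K v w A)) (hc : ¬(σ.1 = p.erase w ∨ σ.1 = p.erase v)) :
    (zmap hpK hnr hmem σ).1 = σ.1 := by
  unfold zmap; rw [dif_neg hc]

end FPZ
end

noncomputable section
namespace FPZ

attribute [local instance] Classical.propDecidable

variable {V : Type u}

theorem elemzip_car {K : Set (Finset V)} {v w : V} {A : Finset (Finset V)}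
    (hG : Good K v w A) {p : Finset V} (hpK : p ∈ K) (hpv : v ∈ p) (hpw : w ∈ p)
    (hpA : p ∉ A)
    (hmin : ∀ p' ∈ K, v ∈ p' → w ∈ p' → p' ⊆ p → p' ≠ p → p' ∈ A)
    (hG' : Good K v w (insert p A)) :
    ∃ (h : ↥(Car K v w A) → ↥(Car K v w (insert p A))) (P Q R : ↥(Car K v w A)),
      @IsElementaryZipping _ _ (carPO hG) (carPO hG') h P Q R := by
  have hvQ : v ∈ p.erase w := Finset.mem_erase.mpr ⟨hG.ne, hpv⟩
  have hwQ : w ∉ p.erase w := Finset.notMem_erase w p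
  have hwR : w ∈ p.erase v := Finset.mem_erase.mpr ⟨Ne.symm hG.ne, hpw⟩
  have hvR : v ∉ p.erase v := Finset.notMem_erase v p
  have hQK : p.erase w ∈ K := hG.cpx.2.2 p hpK _ (Finset.erase_subset _ _) ⟨v, hvQ⟩
  have hRK : p.erase v ∈ K := hG.cpx.2.2 p hpK _ (Finset.erase_subset _ _) ⟨w, hwR⟩
  have hQA : p.erase w ∉ A := mem_A_not_mem_A hG (Or.inr hwQ)
  have hRA : p.erase v ∉ A := mem_A_not_mem_A hG (Or.inl hvR)
  have hQnr : ¬ removed v w A (p.erase w) := by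
    rintro ⟨p', hp'A, he | he⟩
    · obtain ⟨-, hv', hw'⟩ := hG.mem p' hp'A
      have hpp : p = p' := by
        have h2 := congrArg (insert w) he
        rwa [Finset.insert_erase hpw, Finset.insert_erase hw'] at h2
      exact hpA (hpp ▸ hp'A)
    · exact (Finset.notMem_erase v p') (he ▸ hvQ)
  have hRnr : ¬ removed v w A (p.erase v) := by
    rintro ⟨p', hp'A, he | he⟩
    · exact (Finset.notMem_erase w p') (he ▸ hwR)
    · obtain ⟨-, hv', hw'⟩ := hG.mem p' hp'A
      have hpp : p = p' := by
        have h2 := congrArg (insert v) he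
        rwa [Finset.insert_erase hpv, Finset.insert_erase hv'] at h2
      exact hpA (hpp ▸ hp'A)
  have hpnr : ¬ removed v w A p := not_removed_double hG hpv hpw
  have hpnr' : ¬ removed v w (insert p A) p := not_removed_double hG' hpv hpw
  have hpQ : p ≠ p.erase w := fun hc => hwQ (hc ▸ hpw)
  have hpR : p ≠ p.erase v := fun hc => hvR (hc ▸ hpv)
  have hcardQ : p.card = (p.erase w).card + 1 := (Finset.card_erase_add_one hpw).symm
  have hcardR : p.card = (p.erase v).card + 1 := (Finset.card_erase_add_one hpv).symm
  have hmemElse : ∀ σ : ↥(Car K v w A), ¬(σ.1 = p.erase w ∨ σ.1 = p.erase v) →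
      σ.1 ∈ Car K v w (insert p A) := by
    intro σ hc
    refine ⟨σ.2.1, ?_⟩
    rintro ⟨p', hp', he⟩
    rcases Finset.mem_insert.mp hp' with hpp | hp'
    · rw [hpp] at he; exact hc he
    · exact σ.2.2 ⟨p', hp', he⟩
  have clsQ : cls v w A (p.erase w) = {p.erase w} := cls_of_not_mem hQA
  have clsR : cls v w A (p.erase v) = {p.erase v} := cls_of_not_mem hRA
  have clsP : cls v w A p = {p} := cls_of_not_mem hpA
  have clsP' : cls v w (insert p A) p = {p, p.erase w, p.erase v} :=
    cls_of_mem (Finset.mem_insert_self p A)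
  have cls_ne : ∀ x : Finset V, x ≠ p →
      cls v w (insert p A) x = cls v w A x := by
    intro x hx
    unfold cls
    by_cases hxA : x ∈ A
    · rw [if_pos hxA, if_pos (Finset.mem_insert_of_mem hxA)]
    · rw [if_neg hxA, if_neg (fun h => by
        rcases Finset.mem_insert.mp h with h | h
        exacts [hx h, hxA h])]
  refine ⟨zmap hpK hpnr' hmemElse, ⟨p, hpK, hpnr⟩, ⟨p.erase w, hQK, hQnr⟩,
    ⟨p.erase v, hRK, hRnr⟩, ?_⟩
  have hmset : ∀ x : ↥(Car K v w A),
      x ∈ ({⟨p, hpK, hpnr⟩, ⟨p.erase w, hQK, hQnr⟩, ⟨p.erase v, hRK, hRnr⟩} :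
        Set ↥(Car K v w A)) ↔
      (x.1 = p ∨ x.1 = p.erase w ∨ x.1 = p.erase v) := by
    intro x
    simp [Set.mem_insert_iff, Set.mem_singleton_iff, Subtype.ext_iff]
  -- the cover relations, generically
  have covgen : ∀ (Y : ↥(Car K v w A)) (b : V), Y.1 ⊆ p → p.card = Y.1.card + 1 →
      Y.1 ∉ A → b ∉ Y.1 → (∀ c ∈ A, b ∈ c) →
      @CovBy _ (@Preorder.toLT _ (@PartialOrder.toPreorder _ (carPO hG)))
        Y ⟨p, hpK, hpnr⟩ := by
    intro Y b hYp hYcard hYA hbY hbA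
    constructor
    · constructor
      · exact ⟨Y.1, self_mem_cls, p, self_mem_cls, hYp⟩
      · rintro ⟨p1, hp1, Y1, hY1, hsub⟩
        rw [clsP] at hp1
        have e1 : p1 = p := by simpa using hp1
        rw [cls_of_not_mem hYA] at hY1
        have e2 : Y1 = Y.1 := by simpa using hY1
        rw [e1, e2] at hsub
        have h2 : p.card ≤ Y.1.card := Finset.card_le_card hsub
        omega
    · rintro c ⟨hAle, hAnl⟩ ⟨hBle, hBnl⟩
      obtain ⟨Y1, hY1, c1, hc1', hs1⟩ := hAle
      obtain ⟨c2, hc2', p1, hp1, hs2⟩ := hBle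
      rw [cls_of_not_mem hYA] at hY1
      have e1 : Y1 = Y.1 := by simpa using hY1
      rw [clsP] at hp1
      have e2 : p1 = p := by simpa using hp1
      rw [e1] at hs1; rw [e2] at hs2
      have hcp : c.1 ≠ p := by
        intro hc
        exact hBnl ⟨p, self_mem_cls, c.1, self_mem_cls, by rw [hc]⟩
      by_cases hcA : c.1 ∈ A
      · obtain ⟨-, hvc, hwc⟩ := hG.mem c.1 hcA
        have hsubc : c.1 ⊆ p := by
          intro x hx
          by_cases hxv : x = v
          · rw [hxv]; exact hpv
          by_cases hxw : x = w
          · rw [hxw]; exact hpw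
          exact hs2 (mem_cls_of_ne hc2' hx hxv hxw)
        have hlt : c.1.card < p.card :=
          Finset.card_lt_card (Finset.ssubset_iff_subset_ne.mpr ⟨hsubc, hcp⟩)
        have h3 : Y.1.card ≤ c1.card := Finset.card_le_card hs1
        have h4 : c1.card ≤ c.1.card := Finset.card_le_card (cls_subset_self hc1')
        have e3 : Y.1 = c1 := Finset.eq_of_subset_of_card_le hs1 (by omega)
        have e4 : c1 = c.1 := Finset.eq_of_subset_of_card_le (cls_subset_self hc1') (by omega)
        have hbc : b ∈ Y.1 := by rw [e3, e4]; exact hbA c.1 hcA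
        exact hbY hbc
      · have e3 : c1 = c.1 := by rw [cls_of_not_mem hcA] at hc1'; simpa using hc1'
        have e4 : c2 = c.1 := by rw [cls_of_not_mem hcA] at hc2'; simpa using hc2'
        rw [e3] at hs1; rw [e4] at hs2
        have h3 : Y.1.card ≤ c.1.card := Finset.card_le_card hs1
        have h4 : c.1.card ≤ p.card := Finset.card_le_card hs2
        by_cases h5 : c.1.card = p.card
        · exact hcp (Finset.eq_of_subset_of_card_le hs2 (by omega))
        · have e5 : Y.1 = c.1 := Finset.eq_of_subset_of_card_le hs1 (by omega)
          exact hAnl ⟨c.1, self_mem_cls, Y.1, self_mem_cls, by rw [e5]⟩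
  refine ⟨?_, ?_, ?_, ?_, ?_, ?_, ?_, ?_, ?_, ?_, ?_, ?_⟩
  · -- ¬ Q ≤ R
    rintro ⟨a, ha, b, hb, hs⟩
    rw [clsQ] at ha; rw [clsR] at hb
    have e1 : a = p.erase w := by simpa using ha
    have e2 : b = p.erase v := by simpa using hb
    rw [e1, e2] at hs
    exact hvR (hs hvQ)
  · -- ¬ R ≤ Q
    rintro ⟨a, ha, b, hb, hs⟩
    rw [clsR] at ha; rw [clsQ] at hb
    have e1 : a = p.erase v := by simpa using ha
    have e2 : b = p.erase w := by simpa using hb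
    rw [e1, e2] at hs
    exact hwQ (hs hwR)
  · -- Q ⋖ P
    exact covgen _ w (Finset.erase_subset _ _) hcardQ hQA hwQ (fun c hc => (hG.mem c hc).2.2)
  · -- R ⋖ P
    exact covgen _ v (Finset.erase_subset _ _) hcardR hRA hvR (fun c hc => (hG.mem c hc).2.1)
  · -- condition (i)
    rintro s ⟨hsle, hsnl⟩ hsQ hsR
    obtain ⟨s1, hs1, p1, hp1, hsub⟩ := hsle
    rw [clsP] at hp1
    have e1 : p1 = p := by simpa using hp1
    rw [e1] at hsub
    have hsp : s.1 ≠ p := by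
      intro hc
      exact hsnl ⟨p, self_mem_cls, s.1, self_mem_cls, by rw [hc]⟩
    by_cases hsA : s.1 ∈ A
    · obtain ⟨hsK, hvs, hws⟩ := hG.mem s.1 hsA
      have hsubs : s.1 ⊆ p := by
        intro x hx
        by_cases hxv : x = v
        · rw [hxv]; exact hpv
        by_cases hxw : x = w
        · rw [hxw]; exact hpw
        exact hsub (mem_cls_of_ne hs1 hx hxv hxw)
      have hslt : s.1.card < p.card :=
        Finset.card_lt_card (Finset.ssubset_iff_subset_ne.mpr ⟨hsubs, hsp⟩)
      constructor
      · constructor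
        · refine ⟨s.1.erase w, ?_, p.erase w, self_mem_cls, ?_⟩
          · rw [cls_of_mem hsA]; simp
          · exact Finset.erase_subset_erase w hsubs
        · rintro ⟨q1, hq1, s2, hs2, hsub2⟩
          rw [clsQ] at hq1
          have e3 : q1 = p.erase w := by simpa using hq1
          rw [e3] at hsub2
          have h4 := Finset.card_le_card hsub2
          have h5 := Finset.card_le_card (cls_subset_self hs2)
          have e6 : p.erase w = s2 := Finset.eq_of_subset_of_card_le hsub2 (by omega)
          have e7 : s2 = s.1 := Finset.eq_of_subset_of_card_le (cls_subset_self hs2) (by omega)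
          have hws' : w ∈ p.erase w := by rw [e6, e7]; exact hws
          exact hwQ hws'
      · constructor
        · refine ⟨s.1.erase v, ?_, p.erase v, self_mem_cls, ?_⟩
          · rw [cls_of_mem hsA]; simp
          · exact Finset.erase_subset_erase v hsubs
        · rintro ⟨q1, hq1, s2, hs2, hsub2⟩
          rw [clsR] at hq1
          have e3 : q1 = p.erase v := by simpa using hq1
          rw [e3] at hsub2
          have h4 := Finset.card_le_card hsub2
          have h5 := Finset.card_le_card (cls_subset_self hs2)
          have e6 : p.erase v = s2 := Finset.eq_of_subset_of_card_le hsub2 (by omega)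
          have e7 : s2 = s.1 := Finset.eq_of_subset_of_card_le (cls_subset_self hs2) (by omega)
          have hvs' : v ∈ p.erase v := by rw [e6, e7]; exact hvs
          exact hvR hvs'
    · have e2 : s1 = s.1 := by rw [cls_of_not_mem hsA] at hs1; simpa using hs1
      rw [e2] at hsub
      by_cases hvs : v ∈ s.1 <;> by_cases hws : w ∈ s.1
      · exact (hsA (hmin s.1 s.2.1 hvs hws hsub hsp)).elim
      · -- v ∈ s, w ∉ s
        have h1 : insert w s.1 ⊆ p := Finset.insert_subset_iff.mpr ⟨hpw, hsub⟩
        have h2 : insert w s.1 ∈ K :=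
          hG.cpx.2.2 p hpK _ h1 ⟨w, Finset.mem_insert_self w s.1⟩
        by_cases h3 : insert w s.1 = p
        · have h6 : s.1 = p.erase w := by rw [← h3, Finset.erase_insert hws]
          exact (hsQ (Subtype.ext h6)).elim
        · have h4 : insert w s.1 ∈ A := hmin _ h2 (Finset.mem_insert_of_mem hvs)
            (Finset.mem_insert_self w s.1) h1 h3
          exact (s.2.2 ⟨_, h4, Or.inl (Finset.erase_insert hws).symm⟩).elim
      · -- w ∈ s, v ∉ s
        have h1 : insert v s.1 ⊆ p := Finset.insert_subset_iff.mpr ⟨hpv, hsub⟩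
        have h2 : insert v s.1 ∈ K :=
          hG.cpx.2.2 p hpK _ h1 ⟨v, Finset.mem_insert_self v s.1⟩
        by_cases h3 : insert v s.1 = p
        · have h6 : s.1 = p.erase v := by rw [← h3, Finset.erase_insert hvs]
          exact (hsR (Subtype.ext h6)).elim
        · have h4 : insert v s.1 ∈ A := hmin _ h2 (Finset.mem_insert_self v s.1)
            (Finset.mem_insert_of_mem hws) h1 h3
          exact (s.2.2 ⟨_, h4, Or.inr (Finset.erase_insert hvs).symm⟩).elim
      · -- neither v nor w in s
        constructor
        · constructor
          · exact ⟨s.1, self_mem_cls, p.erase w, self_mem_cls,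
              fun x hx => Finset.mem_erase.mpr ⟨fun hc => hws (hc ▸ hx), hsub hx⟩⟩
          · rintro ⟨q1, hq1, s2, hs2, hsub2⟩
            rw [clsQ] at hq1
            have e3 : q1 = p.erase w := by simpa using hq1
            have e4 : s2 = s.1 := by rw [cls_of_not_mem hsA] at hs2; simpa using hs2
            rw [e3, e4] at hsub2
            exact hvs (hsub2 hvQ)
        · constructor
          · exact ⟨s.1, self_mem_cls, p.erase v, self_mem_cls,
              fun x hx => Finset.mem_erase.mpr ⟨fun hc => hvs (hc ▸ hx), hsub hx⟩⟩
          · rintro ⟨q1, hq1, s2, hs2, hsub2⟩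
            rw [clsR] at hq1
            have e3 : q1 = p.erase v := by simpa using hq1
            have e4 : s2 = s.1 := by rw [cls_of_not_mem hsA] at hs2; simpa using hs2
            rw [e3, e4] at hsub2
            exact hws (hsub2 hwR)
  · -- condition (ii)
    rintro s ⟨hqs, -⟩ ⟨hrs, -⟩
    obtain ⟨q1, hq1, s1, hs1, hsub1⟩ := hqs
    obtain ⟨r1, hr1, s2, hs2, hsub2⟩ := hrs
    rw [clsQ] at hq1
    have e1 : q1 = p.erase w := by simpa using hq1
    rw [clsR] at hr1
    have e2 : r1 = p.erase v := by simpa using hr1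
    rw [e1] at hsub1; rw [e2] at hsub2
    by_cases hsA : s.1 ∈ A
    · obtain ⟨-, hvs, hws⟩ := hG.mem s.1 hsA
      refine ⟨p, self_mem_cls, s.1, self_mem_cls, fun x hx => ?_⟩
      by_cases hxv : x = v
      · rw [hxv]; exact hvs
      by_cases hxw : x = w
      · rw [hxw]; exact hws
      exact cls_subset_self hs1 (hsub1 (Finset.mem_erase.mpr ⟨hxw, hx⟩))
    · have e3 : s1 = s.1 := by rw [cls_of_not_mem hsA] at hs1; simpa using hs1
      have e4 : s2 = s.1 := by rw [cls_of_not_mem hsA] at hs2; simpa using hs2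
      rw [e3] at hsub1; rw [e4] at hsub2
      refine ⟨p, self_mem_cls, s.1, self_mem_cls, fun x hx => ?_⟩
      by_cases hxw : x = w
      · rw [hxw] at hx ⊢
        exact hsub2 (Finset.mem_erase.mpr ⟨Ne.symm hG.ne, hx⟩)
      · exact hsub1 (Finset.mem_erase.mpr ⟨hxw, hx⟩)
  · -- Monotone
    have hclsh : ∀ σ : ↥(Car K v w A),
        cls v w A σ.1 ⊆ cls v w (insert p A) ((zmap hpK hpnr' hmemElse σ).1) := by
      intro σ
      by_cases hc : σ.1 = p.erase w ∨ σ.1 = p.erase v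
      · rw [zmap_pos _ _ _ _ hc, clsP']
        rcases hc with hc | hc <;> rw [hc]
        · rw [cls_of_not_mem hQA]
          intro x hx
          rw [Set.mem_singleton_iff] at hx
          rw [hx]; simp
        · rw [cls_of_not_mem hRA]
          intro x hx
          rw [Set.mem_singleton_iff] at hx
          rw [hx]; simp
      · rw [zmap_neg _ _ _ _ hc]
        by_cases hcp : σ.1 = p
        · rw [hcp, clsP, clsP']
          intro x hx
          rw [Set.mem_singleton_iff] at hx
          rw [hx]; simp
        · rw [cls_ne σ.1 hcp]
    intro σ τ hle
    obtain ⟨σ', hσ', τ', hτ', hs⟩ := hle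
    exact ⟨σ', hclsh σ hσ', τ', hclsh τ hτ', hs⟩
  · -- Surjective
    intro τ
    have hτA' : τ.1 ∈ Car K v w A := by
      refine ⟨τ.2.1, fun hr => τ.2.2 ?_⟩
      obtain ⟨p', hp', he⟩ := hr
      exact ⟨p', Finset.mem_insert_of_mem hp', he⟩
    have hneq : ¬(τ.1 = p.erase w ∨ τ.1 = p.erase v) := by
      rintro (hc | hc)
      · exact τ.2.2 ⟨p, Finset.mem_insert_self p A, Or.inl hc⟩
      · exact τ.2.2 ⟨p, Finset.mem_insert_self p A, Or.inr hc⟩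
    exact ⟨⟨τ.1, hτA'⟩, Subtype.ext (zmap_neg _ _ _ _ hneq)⟩
  · -- fibers
    intro x y
    by_cases hx : x.1 = p.erase w ∨ x.1 = p.erase v <;>
      by_cases hy : y.1 = p.erase w ∨ y.1 = p.erase v
    · constructor
      · intro _
        exact Or.inr ⟨(hmset x).mpr (Or.inr hx), (hmset y).mpr (Or.inr hy)⟩
      · intro _
        exact Subtype.ext (by rw [zmap_pos _ _ _ _ hx, zmap_pos _ _ _ _ hy])
    · constructor
      · intro he
        have h6 : p = y.1 := by rw [← zmap_pos hpK hpnr' hmemElse _ hx, he, zmap_neg hpK hpnr' hmemElse _ hy]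
        exact Or.inr ⟨(hmset x).mpr (Or.inr hx), (hmset y).mpr (Or.inl h6.symm)⟩
      · rintro (rfl | ⟨-, hy'⟩)
        · exact absurd hx hy
        · rcases (hmset y).mp hy' with h1 | h1 | h1
          · exact Subtype.ext (by rw [zmap_pos _ _ _ _ hx, zmap_neg _ _ _ _ hy, h1])
          · exact absurd (Or.inl h1) hy
          · exact absurd (Or.inr h1) hy
    · constructor
      · intro he
        have h6 : x.1 = p := by rw [← zmap_neg hpK hpnr' hmemElse _ hx, he, zmap_pos hpK hpnr' hmemElse _ hy]
        exact Or.inr ⟨(hmset x).mpr (Or.inl h6), (hmset y).mpr (Or.inr hy)⟩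
      · rintro (rfl | ⟨hx', -⟩)
        · exact absurd hy hx
        · rcases (hmset x).mp hx' with h1 | h1 | h1
          · exact Subtype.ext (by rw [zmap_neg _ _ _ _ hx, zmap_pos _ _ _ _ hy, h1])
          · exact absurd (Or.inl h1) hx
          · exact absurd (Or.inr h1) hx
    · constructor
      · intro he
        exact Or.inl (Subtype.ext (by rw [← zmap_neg hpK hpnr' hmemElse _ hx, he, zmap_neg hpK hpnr' hmemElse _ hy]))
      · rintro (rfl | ⟨hx', hy'⟩)
        · rfl
        · have hx1 : x.1 = p := by
            rcases (hmset x).mp hx' with h1 | h1 | h1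
            · exact h1
            · exact absurd (Or.inl h1) hx
            · exact absurd (Or.inr h1) hx
          have hy1 : y.1 = p := by
            rcases (hmset y).mp hy' with h1 | h1 | h1
            · exact h1
            · exact absurd (Or.inl h1) hy
            · exact absurd (Or.inr h1) hy
          exact Subtype.ext (by rw [zmap_neg _ _ _ _ hx, zmap_neg _ _ _ _ hy, hx1, hy1])
  · -- order outside the class
    intro x y hx hy
    rw [hmset x] at hx; rw [hmset y] at hy
    push_neg at hx hy
    have hvx : (zmap hpK hpnr' hmemElse x).1 = x.1 :=
      zmap_neg _ _ _ _ (by rintro (h | h); exacts [hx.2.1 h, hx.2.2 h])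
    have hvy : (zmap hpK hpnr' hmemElse y).1 = y.1 :=
      zmap_neg _ _ _ _ (by rintro (h | h); exacts [hy.2.1 h, hy.2.2 h])
    constructor
    · rintro ⟨a, ha, b, hb, hs⟩
      rw [hvx, cls_ne x.1 hx.1] at ha
      rw [hvy, cls_ne y.1 hy.1] at hb
      exact ⟨a, ha, b, hb, hs⟩
    · rintro ⟨a, ha, b, hb, hs⟩
      refine ⟨a, ?_, b, ?_, hs⟩
      · rw [hvx, cls_ne x.1 hx.1]; exact ha
      · rw [hvy, cls_ne y.1 hy.1]; exact hb
  · -- below the collapsed point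
    intro x hx
    rw [hmset x] at hx
    push_neg at hx
    have hvx : (zmap hpK hpnr' hmemElse x).1 = x.1 :=
      zmap_neg _ _ _ _ (by rintro (h | h); exacts [hx.2.1 h, hx.2.2 h])
    have hvP : (zmap hpK hpnr' hmemElse ⟨p, hpK, hpnr⟩).1 = p :=
      zmap_neg _ _ _ _ (by rintro (h | h); exacts [hpQ h, hpR h])
    constructor
    · rintro ⟨a, ha, b, hb, hs⟩
      rw [hvx, cls_ne x.1 hx.1] at ha
      rw [hvP, clsP'] at hb
      rcases (show b = p ∨ b = p.erase w ∨ b = p.erase v by simpa using hb) with h | h | h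
      · rw [h] at hs
        exact Or.inl ⟨a, ha, p, self_mem_cls, hs⟩
      · rw [h] at hs
        exact Or.inr (Or.inl ⟨a, ha, p.erase w, self_mem_cls, hs⟩)
      · rw [h] at hs
        exact Or.inr (Or.inr ⟨a, ha, p.erase v, self_mem_cls, hs⟩)
    · rintro (⟨a, ha, b, hb, hs⟩ | ⟨a, ha, b, hb, hs⟩ | ⟨a, ha, b, hb, hs⟩)
      · rw [clsP] at hb
        have e1 : b = p := by simpa using hb
        rw [e1] at hs
        refine ⟨a, ?_, p, ?_, hs⟩
        · rw [hvx, cls_ne x.1 hx.1]; exact ha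
        · rw [hvP, clsP']; simp
      · rw [clsQ] at hb
        have e1 : b = p.erase w := by simpa using hb
        rw [e1] at hs
        refine ⟨a, ?_, p.erase w, ?_, hs⟩
        · rw [hvx, cls_ne x.1 hx.1]; exact ha
        · rw [hvP, clsP']; simp
      · rw [clsR] at hb
        have e1 : b = p.erase v := by simpa using hb
        rw [e1] at hs
        refine ⟨a, ?_, p.erase v, ?_, hs⟩
        · rw [hvx, cls_ne x.1 hx.1]; exact ha
        · rw [hvP, clsP']; simp
  · -- above the collapsed point
    intro y hy
    rw [hmset y] at hy
    push_neg at hy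
    have hvy : (zmap hpK hpnr' hmemElse y).1 = y.1 :=
      zmap_neg _ _ _ _ (by rintro (h | h); exacts [hy.2.1 h, hy.2.2 h])
    have hvP : (zmap hpK hpnr' hmemElse ⟨p, hpK, hpnr⟩).1 = p :=
      zmap_neg _ _ _ _ (by rintro (h | h); exacts [hpQ h, hpR h])
    constructor
    · rintro ⟨a, ha, b, hb, hs⟩
      rw [hvP, clsP'] at ha
      rw [hvy, cls_ne y.1 hy.1] at hb
      rcases (show a = p ∨ a = p.erase w ∨ a = p.erase v by simpa using ha) with h | h | h
      · rw [h] at hs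
        exact Or.inl ⟨p, self_mem_cls, b, hb, hs⟩
      · rw [h] at hs
        exact Or.inr (Or.inl ⟨p.erase w, self_mem_cls, b, hb, hs⟩)
      · rw [h] at hs
        exact Or.inr (Or.inr ⟨p.erase v, self_mem_cls, b, hb, hs⟩)
    · rintro (⟨a, ha, b, hb, hs⟩ | ⟨a, ha, b, hb, hs⟩ | ⟨a, ha, b, hb, hs⟩)
      · rw [clsP] at ha
        have e1 : a = p := by simpa using ha
        rw [e1] at hs
        refine ⟨p, ?_, b, ?_, hs⟩
        · rw [hvP, clsP']; simp
        · rw [hvy, cls_ne y.1 hy.1]; exact hb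
      · rw [clsQ] at ha
        have e1 : a = p.erase w := by simpa using ha
        rw [e1] at hs
        refine ⟨p.erase w, ?_, b, ?_, hs⟩
        · rw [hvP, clsP']; simp
        · rw [hvy, cls_ne y.1 hy.1]; exact hb
      · rw [clsR] at ha
        have e1 : a = p.erase v := by simpa using ha
        rw [e1] at hs
        refine ⟨p.erase v, ?_, b, ?_, hs⟩
        · rw [hvP, clsP']; simp
        · rw [hvy, cls_ne y.1 hy.1]; exact hb

end FPZ
end

noncomputable section
namespace FPZ

attribute [local instance] Classical.propDecidable

variable {V : Type u}

theorem mem_fimage {W : Type u} (φ : V → W) (σ : Finset V) (y : W) :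
    y ∈ fimage φ σ ↔ ∃ x ∈ σ, φ x = y := by
  simp [fimage]

/-- Order isomorphism between the intermediate poset at the full family of doubles
and the face poset of `L`. -/
theorem final_iso {W : Type u} {K : Set (Finset V)} {L : Set (Finset W)} {φ : V → W}
    {v w : V} (hz : IsElemEdgeZip K L φ v w) {A : Finset (Finset V)}
    (hAiff : ∀ q : Finset V, q ∈ A ↔ q ∈ K ∧ v ∈ q ∧ w ∈ q) (hG : Good K v w A) :
    Nonempty (@OrderIso ↥(Car K v w A) ↥L
      (@Preorder.toLE _ (@PartialOrder.toPreorder _ (carPO hG))) _) := by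
  obtain ⟨hK, hL, hvw, hφvw, hinj, hpair, himg, hLeq, hlink⟩ := hz
  have himg_erase_w : ∀ q : Finset V, v ∈ q → fimage φ (q.erase w) = fimage φ q := by
    intro q hv
    apply Finset.ext
    intro y
    rw [mem_fimage, mem_fimage]
    constructor
    · rintro ⟨x, hx, rfl⟩; exact ⟨x, Finset.mem_of_mem_erase hx, rfl⟩
    · rintro ⟨x, hx, rfl⟩
      by_cases hxw : x = w
      · exact ⟨v, Finset.mem_erase.mpr ⟨hvw, hv⟩, by rw [hφvw, hxw]⟩
      · exact ⟨x, Finset.mem_erase.mpr ⟨hxw, hx⟩, rfl⟩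
  have himg_erase_v : ∀ q : Finset V, w ∈ q → fimage φ (q.erase v) = fimage φ q := by
    intro q hw
    apply Finset.ext
    intro y
    rw [mem_fimage, mem_fimage]
    constructor
    · rintro ⟨x, hx, rfl⟩; exact ⟨x, Finset.mem_of_mem_erase hx, rfl⟩
    · rintro ⟨x, hx, rfl⟩
      by_cases hxv : x = v
      · exact ⟨w, Finset.mem_erase.mpr ⟨Ne.symm hvw, hw⟩, by rw [← hφvw, hxv]⟩
      · exact ⟨x, Finset.mem_erase.mpr ⟨hxv, hx⟩, rfl⟩
  have himg_cls : ∀ {σ x : Finset V}, x ∈ cls v w A σ → fimage φ x = fimage φ σ := by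
    intro σ x hx
    rcases mem_cls_cases hx with rfl | ⟨hσA, rfl | rfl⟩
    · rfl
    · exact himg_erase_w σ ((hAiff σ).mp hσA).2.1
    · exact himg_erase_v σ ((hAiff σ).mp hσA).2.2
  have hsub_mem : ∀ {σ τ : Finset V}, fimage φ σ ⊆ fimage φ τ →
      ∀ x ∈ σ, x ∈ τ ∨ (x = v ∧ w ∈ τ) ∨ (x = w ∧ v ∈ τ) := by
    intro σ τ hsub x hx
    have h1 : φ x ∈ fimage φ τ := hsub ((mem_fimage φ σ (φ x)).mpr ⟨x, hx, rfl⟩)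
    obtain ⟨y, hy, he⟩ := (mem_fimage φ τ (φ x)).mp h1
    rcases hinj y x he with h2 | ⟨h2, h3⟩ | ⟨h2, h3⟩
    · rw [← h2]; exact Or.inl hy
    · rw [h2] at hy; exact Or.inr (Or.inr ⟨h3, hy⟩)
    · rw [h2] at hy; exact Or.inr (Or.inl ⟨h3, hy⟩)
  have hlink' : ∀ ρ : Finset V, v ∉ ρ → w ∉ ρ → insert v ρ ∈ K → insert w ρ ∈ K →
      insert v (insert w ρ) ∈ K := by
    intro ρ hvρ hwρ h1 h2
    by_cases hρ : ρ = ∅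
    · subst hρ
      have he : insert v (insert w (∅ : Finset V)) = pairFinset v w := by
        ext x; simp [pairFinset]
      rw [he]; exact hpair
    · have hρK : ρ ∈ K := hK.2.2 _ h1 ρ (Finset.subset_insert v ρ)
        (Finset.nonempty_iff_ne_empty.mpr hρ)
      have hmem1 : ρ ∈ simplicialLink K {v} := by
        refine ⟨hρK, Finset.disjoint_singleton_right.mpr hvρ, ?_⟩
        have he : funion ρ {v} = insert v ρ := by ext x; simp [funion, Or.comm]
        rw [he]; exact h1
      have hmem2 : ρ ∈ simplicialLink K {w} := by
        refine ⟨hρK, Finset.disjoint_singleton_right.mpr hwρ, ?_⟩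
        have he : funion ρ {w} = insert w ρ := by ext x; simp [funion, Or.comm]
        rw [he]; exact h2
      have hmem : ρ ∈ simplicialLink K (pairFinset v w) := by
        rw [← hlink]; exact ⟨hmem1, hmem2⟩
      have h3 := hmem.2.2
      have he : funion ρ (pairFinset v w) = insert v (insert w ρ) := by
        ext x; simp [funion, pairFinset]
      rwa [he] at h3
  have hrem1 : ∀ σ : Finset V, v ∈ σ → w ∉ σ → insert w σ ∈ K → removed v w A σ := by
    intro σ hv hw hK'
    exact ⟨insert w σ, (hAiff _).mpr ⟨hK', Finset.mem_insert_of_mem hv,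
      Finset.mem_insert_self _ _⟩, Or.inl (Finset.erase_insert hw).symm⟩
  have hrem2 : ∀ σ : Finset V, w ∈ σ → v ∉ σ → insert v σ ∈ K → removed v w A σ := by
    intro σ hw hv hK'
    exact ⟨insert v σ, (hAiff _).mpr ⟨hK', Finset.mem_insert_self _ _,
      Finset.mem_insert_of_mem hw⟩, Or.inr (Finset.erase_insert hv).symm⟩
  -- injectivity
  have hinj' : ∀ σ τ : ↥(Car K v w A), fimage φ σ.1 = fimage φ τ.1 → σ = τ := by
    intro σ τ he
    have hs1 : fimage φ σ.1 ⊆ fimage φ τ.1 := by rw [he]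
    have hs2 : fimage φ τ.1 ⊆ fimage φ σ.1 := by rw [he]
    have h1 := hsub_mem hs1
    have h2 := hsub_mem hs2
    have hcore : ∀ x : V, x ≠ v → x ≠ w → (x ∈ σ.1 ↔ x ∈ τ.1) := by
      intro x hxv hxw
      constructor
      · intro hx
        rcases h1 x hx with h | ⟨h, -⟩ | ⟨h, -⟩
        · exact h
        · exact absurd h hxv
        · exact absurd h hxw
      · intro hx
        rcases h2 x hx with h | ⟨h, -⟩ | ⟨h, -⟩
        · exact h
        · exact absurd h hxv
        · exact absurd h hxw
    -- transfer of v-membership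
    have Hv : ∀ σ τ : ↥(Car K v w A), fimage φ σ.1 ⊆ fimage φ τ.1 →
        fimage φ τ.1 ⊆ fimage φ σ.1 → v ∈ σ.1 → v ∈ τ.1 := by
      intro σ τ hs1 hs2 hv
      have h1 := hsub_mem hs1
      have h2 := hsub_mem hs2
      have hcore : ∀ x : V, x ≠ v → x ≠ w → x ∈ τ.1 → x ∈ σ.1 := by
        intro x hxv hxw hx
        rcases h2 x hx with h | ⟨h, -⟩ | ⟨h, -⟩
        · exact h
        · exact absurd h hxv
        · exact absurd h hxw
      have hcore' : ∀ x : V, x ≠ v → x ≠ w → x ∈ σ.1 → x ∈ τ.1 := by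
        intro x hxv hxw hx
        rcases h1 x hx with h | ⟨h, -⟩ | ⟨h, -⟩
        · exact h
        · exact absurd h hxv
        · exact absurd h hxw
      by_contra hvτ
      have hwτ : w ∈ τ.1 := by
        rcases h1 v hv with h | ⟨-, h⟩ | ⟨h, -⟩
        · exact absurd h hvτ
        · exact h
        · exact absurd h hvw
      by_cases hwσ : w ∈ σ.1
      · -- τ ⊆ σ and insert v τ ⊆ σ, so τ is removed: contradiction
        have hτσ : τ.1 ⊆ σ.1 := by
          intro x hx
          by_cases hxv : x = v
          · exact absurd (hxv ▸ hx) hvτ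
          by_cases hxw : x = w
          · rw [hxw]; exact hwσ
          exact hcore x hxv hxw hx
        have h4 : insert v τ.1 ∈ K :=
          hK.2.2 σ.1 σ.2.1 _ (Finset.insert_subset_iff.mpr ⟨hv, hτσ⟩)
            ⟨v, Finset.mem_insert_self v τ.1⟩
        exact absurd (hrem2 τ.1 hwτ hvτ h4) τ.2.2
      · -- link case: insert w σ ∈ K, so σ is removed: contradiction
        have hρ1 : insert v (σ.1.erase v) ∈ K := by
          rw [Finset.insert_erase hv]; exact σ.2.1
        have hρ2 : insert w (σ.1.erase v) ∈ K := by
          have he : insert w (σ.1.erase v) = τ.1 := by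
            apply Finset.ext
            intro x
            rw [Finset.mem_insert, Finset.mem_erase]
            constructor
            · rintro (rfl | ⟨hxv, hx⟩)
              · exact hwτ
              · exact hcore' x hxv (fun hc => hwσ (hc ▸ hx)) hx
            · intro hx
              by_cases hxw : x = w
              · exact Or.inl hxw
              · refine Or.inr ⟨?_, hcore x ?_ hxw hx⟩ <;>
                  exact fun hc => hvτ (hc ▸ hx)
          rw [he]; exact τ.2.1
        have h3 := hlink' (σ.1.erase v) (Finset.notMem_erase v σ.1)
          (fun hc => hwσ (Finset.mem_of_mem_erase hc)) hρ1 hρ2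
        rw [Finset.insert_comm, Finset.insert_erase hv] at h3
        exact absurd (hrem1 σ.1 hv hwσ h3) σ.2.2
    have Hw : ∀ σ τ : ↥(Car K v w A), fimage φ σ.1 ⊆ fimage φ τ.1 →
        fimage φ τ.1 ⊆ fimage φ σ.1 → w ∈ σ.1 → w ∈ τ.1 := by
      intro σ τ hs1 hs2 hw
      have h1 := hsub_mem hs1
      have h2 := hsub_mem hs2
      have hcore : ∀ x : V, x ≠ v → x ≠ w → x ∈ τ.1 → x ∈ σ.1 := by
        intro x hxv hxw hx
        rcases h2 x hx with h | ⟨h, -⟩ | ⟨h, -⟩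
        · exact h
        · exact absurd h hxv
        · exact absurd h hxw
      have hcore' : ∀ x : V, x ≠ v → x ≠ w → x ∈ σ.1 → x ∈ τ.1 := by
        intro x hxv hxw hx
        rcases h1 x hx with h | ⟨h, -⟩ | ⟨h, -⟩
        · exact h
        · exact absurd h hxv
        · exact absurd h hxw
      by_contra hwτ
      have hvτ : v ∈ τ.1 := by
        rcases h1 w hw with h | ⟨h, -⟩ | ⟨-, h⟩
        · exact absurd h hwτ
        · exact absurd h (Ne.symm hvw)
        · exact h
      by_cases hvσ : v ∈ σ.1
      · have hτσ : τ.1 ⊆ σ.1 := by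
          intro x hx
          by_cases hxw : x = w
          · exact absurd (hxw ▸ hx) hwτ
          by_cases hxv : x = v
          · rw [hxv]; exact hvσ
          exact hcore x hxv hxw hx
        have h4 : insert w τ.1 ∈ K :=
          hK.2.2 σ.1 σ.2.1 _ (Finset.insert_subset_iff.mpr ⟨hw, hτσ⟩)
            ⟨w, Finset.mem_insert_self w τ.1⟩
        exact absurd (hrem1 τ.1 hvτ hwτ h4) τ.2.2
      · have hρ1 : insert w (σ.1.erase w) ∈ K := by
          rw [Finset.insert_erase hw]; exact σ.2.1
        have hρ2 : insert v (σ.1.erase w) ∈ K := by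
          have he : insert v (σ.1.erase w) = τ.1 := by
            apply Finset.ext
            intro x
            rw [Finset.mem_insert, Finset.mem_erase]
            constructor
            · rintro (rfl | ⟨hxw, hx⟩)
              · exact hvτ
              · exact hcore' x (fun hc => hvσ (hc ▸ hx)) hxw hx
            · intro hx
              by_cases hxv : x = v
              · exact Or.inl hxv
              · refine Or.inr ⟨?_, hcore x hxv ?_ hx⟩ <;>
                  exact fun hc => hwτ (hc ▸ hx)
          rw [he]; exact τ.2.1
        have h3 := hlink' (σ.1.erase w)
          (fun hc => hvσ (Finset.mem_of_mem_erase hc)) (Finset.notMem_erase w σ.1)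
          hρ2 hρ1
        rw [Finset.insert_erase hw] at h3
        exact absurd (hrem2 σ.1 hw hvσ h3) σ.2.2
    apply Subtype.ext
    apply Finset.ext
    intro x
    by_cases hxv : x = v
    · rw [hxv]
      exact ⟨Hv σ τ hs1 hs2, Hv τ σ hs2 hs1⟩
    by_cases hxw : x = w
    · rw [hxw]
      exact ⟨Hw σ τ hs1 hs2, Hw τ σ hs2 hs1⟩
    exact hcore x hxv hxw
  -- surjectivity
  have hsurj : ∀ y : ↥L, ∃ σ : ↥(Car K v w A), fimage φ σ.1 = y.1 := by
    intro y
    have hy : y.1 ∈ fimage φ '' K := by rw [← hLeq]; exact y.2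
    obtain ⟨σ, hσK, he⟩ := hy
    by_cases hr : removed v w A σ
    · obtain ⟨q, hqA, hq | hq⟩ := hr
      · obtain ⟨hqK, hvq, hwq⟩ := (hAiff q).mp hqA
        refine ⟨⟨q, hqK, not_removed_double hG hvq hwq⟩, ?_⟩
        rw [← he, hq, himg_erase_w q hvq]
      · obtain ⟨hqK, hvq, hwq⟩ := (hAiff q).mp hqA
        refine ⟨⟨q, hqK, not_removed_double hG hvq hwq⟩, ?_⟩
        rw [← he, hq, himg_erase_v q hwq]
    · exact ⟨⟨σ, hσK, hr⟩, he⟩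
  -- monotonicity both ways
  have hmono : ∀ σ τ : ↥(Car K v w A), leA v w A σ.1 τ.1 →
      fimage φ σ.1 ⊆ fimage φ τ.1 := by
    rintro σ τ ⟨a, ha, b, hb, hs⟩
    rw [← himg_cls ha, ← himg_cls hb]
    intro y hy
    obtain ⟨x, hx, rfl⟩ := (mem_fimage φ a y).mp hy
    exact (mem_fimage φ b (φ x)).mpr ⟨x, hs hx, rfl⟩
  have hrev : ∀ σ τ : ↥(Car K v w A), fimage φ σ.1 ⊆ fimage φ τ.1 →
      leA v w A σ.1 τ.1 := by
    intro σ τ hsub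
    have h1 := hsub_mem hsub
    by_cases hvσ : v ∈ σ.1 <;> by_cases hwσ : w ∈ σ.1
    · -- σ is a double, hence in A
      have hσA : σ.1 ∈ A := (hAiff _).mpr ⟨σ.2.1, hvσ, hwσ⟩
      have hvwτ : v ∈ τ.1 ∨ w ∈ τ.1 := by
        rcases h1 v hvσ with h | ⟨-, h⟩ | ⟨h, -⟩
        · exact Or.inl h
        · exact Or.inr h
        · exact absurd h hvw
      by_cases hvτ : v ∈ τ.1 <;> by_cases hwτ : w ∈ τ.1
      · refine ⟨σ.1, self_mem_cls, τ.1, self_mem_cls, fun x hx => ?_⟩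
        rcases h1 x hx with h | ⟨h, -⟩ | ⟨h, -⟩
        · exact h
        · rw [h]; exact hvτ
        · rw [h]; exact hwτ
      · refine ⟨σ.1.erase w, ?_, τ.1, self_mem_cls, fun x hx => ?_⟩
        · rw [cls_of_mem hσA]; simp
        · obtain ⟨hxw, hx⟩ := Finset.mem_erase.mp hx
          rcases h1 x hx with h | ⟨h, -⟩ | ⟨h, -⟩
          · exact h
          · rw [h]; exact hvτ
          · exact absurd h hxw
      · refine ⟨σ.1.erase v, ?_, τ.1, self_mem_cls, fun x hx => ?_⟩
        · rw [cls_of_mem hσA]; simp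
        · obtain ⟨hxv, hx⟩ := Finset.mem_erase.mp hx
          rcases h1 x hx with h | ⟨h, -⟩ | ⟨h, -⟩
          · exact h
          · exact absurd h hxv
          · rw [h]; exact hwτ
      · rcases hvwτ with h | h
        · exact absurd h hvτ
        · exact absurd h hwτ
    · -- v ∈ σ, w ∉ σ
      by_cases hvτ : v ∈ τ.1
      · refine ⟨σ.1, self_mem_cls, τ.1, self_mem_cls, fun x hx => ?_⟩
        rcases h1 x hx with h | ⟨h, -⟩ | ⟨h, -⟩
        · exact h
        · rw [h]; exact hvτ
        · exact absurd (h ▸ hx) hwσ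
      · have hwτ : w ∈ τ.1 := by
          rcases h1 v hvσ with h | ⟨-, h⟩ | ⟨h, -⟩
          · exact absurd h hvτ
          · exact h
          · exact absurd h hvw
        -- σ is removed: contradiction
        have hρτ : insert w (σ.1.erase v) ⊆ τ.1 := by
          refine Finset.insert_subset_iff.mpr ⟨hwτ, fun x hx => ?_⟩
          obtain ⟨hxv, hx⟩ := Finset.mem_erase.mp hx
          rcases h1 x hx with h | ⟨h, -⟩ | ⟨h, -⟩
          · exact h
          · exact absurd h hxv
          · exact absurd (h ▸ hx) hwσ
        have h2 : insert w (σ.1.erase v) ∈ K :=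
          hK.2.2 τ.1 τ.2.1 _ hρτ ⟨w, Finset.mem_insert_self _ _⟩
        have h3 := hlink' (σ.1.erase v) (Finset.notMem_erase v σ.1)
          (fun hc => hwσ (Finset.mem_of_mem_erase hc))
          (by rw [Finset.insert_erase hvσ]; exact σ.2.1) h2
        rw [Finset.insert_comm, Finset.insert_erase hvσ] at h3
        exact absurd (hrem1 σ.1 hvσ hwσ h3) σ.2.2
    · -- w ∈ σ, v ∉ σ
      by_cases hwτ : w ∈ τ.1
      · refine ⟨σ.1, self_mem_cls, τ.1, self_mem_cls, fun x hx => ?_⟩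
        rcases h1 x hx with h | ⟨h, -⟩ | ⟨h, -⟩
        · exact h
        · exact absurd (h ▸ hx) hvσ
        · rw [h]; exact hwτ
      · have hvτ : v ∈ τ.1 := by
          rcases h1 w hwσ with h | ⟨h, -⟩ | ⟨-, h⟩
          · exact absurd h hwτ
          · exact absurd h (Ne.symm hvw)
          · exact h
        have hρτ : insert v (σ.1.erase w) ⊆ τ.1 := by
          refine Finset.insert_subset_iff.mpr ⟨hvτ, fun x hx => ?_⟩
          obtain ⟨hxw, hx⟩ := Finset.mem_erase.mp hx
          rcases h1 x hx with h | ⟨h, -⟩ | ⟨h, -⟩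
          · exact h
          · exact absurd (h ▸ hx) hvσ
          · exact absurd h hxw
        have h2 : insert v (σ.1.erase w) ∈ K :=
          hK.2.2 τ.1 τ.2.1 _ hρτ ⟨v, Finset.mem_insert_self _ _⟩
        have h3 := hlink' (σ.1.erase w)
          (fun hc => hvσ (Finset.mem_of_mem_erase hc)) (Finset.notMem_erase w σ.1)
          h2 (by rw [Finset.insert_erase hwσ]; exact σ.2.1)
        rw [Finset.insert_erase hwσ] at h3
        exact absurd (hrem2 σ.1 hwσ hvσ h3) σ.2.2
    · -- neither
      refine ⟨σ.1, self_mem_cls, τ.1, self_mem_cls, fun x hx => ?_⟩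
      rcases h1 x hx with h | ⟨h, -⟩ | ⟨h, -⟩
      · exact h
      · exact absurd (h ▸ hx) hvσ
      · exact absurd (h ▸ hx) hwσ
  -- build the order isomorphism
  have hbij : Function.Bijective
      (fun σ : ↥(Car K v w A) => (⟨fimage φ σ.1, himg σ.1 σ.2.1⟩ : ↥L)) := by
    constructor
    · intro a b hab
      exact hinj' a b (congrArg Subtype.val hab)
    · intro y
      obtain ⟨σ, hσ⟩ := hsurj y
      exact ⟨σ, Subtype.ext hσ⟩
  refine ⟨{ toEquiv := Equiv.ofBijective _ hbij, map_rel_iff' := ?_ }⟩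
  intro a b
  constructor
  · intro hab
    exact hrev a b hab
  · intro hab
    exact hmono a b hab

end FPZ
end

noncomputable section
namespace FPZ

attribute [local instance] Classical.propDecidable

variable {V : Type u}

theorem carCongr {K : Set (Finset V)} {v w : V} {A B : Finset (Finset V)}
    (h : A = B) (hGA : Good K v w A) (hGB : Good K v w B) :
    Nonempty (@OrderIso ↥(Car K v w A) ↥(Car K v w B)
      (@Preorder.toLE _ (@PartialOrder.toPreorder _ (carPO hGA)))
      (@Preorder.toLE _ (@PartialOrder.toPreorder _ (carPO hGB)))) := by
  subst h
  exact ⟨@OrderIso.refl _ (@Preorder.toLE _ (@PartialOrder.toPreorder _ (carPO hGA)))⟩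

theorem edgeZipStep {W : Type u} {K : Set (Finset V)} {L : Set (Finset W)}
    {φ : V → W} {v w : V} (hz : IsElemEdgeZip K L φ v w) :
    ZipsOnto ↥K ↥L := by
  have hK : IsComplex K := hz.1
  have hvw : v ≠ w := hz.2.2.1
  have main : ∀ (n : ℕ) (A : Finset (Finset V)), A.card = n →
      ∀ (hG : Good K v w A), @ZipsOnto ↥K _ ↥(Car K v w A) (carPO hG) := by
    intro n
    induction n with
    | zero =>
        intro A hcard hG
        have hA0 : A = ∅ := Finset.card_eq_zero.mp hcard
        subst hA0
        have hmem0 : ∀ σ : ↥K, σ.1 ∈ Car K v w (∅ : Finset (Finset V)) := by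
          intro σ
          refine ⟨σ.2, ?_⟩
          rintro ⟨q, hq, -⟩
          exact absurd hq (Finset.notMem_empty q)
        refine ⟨↥K, inferInstance, id, ZipSeq.refl _, ⟨{
            toFun := fun σ => ⟨σ.1, hmem0 σ⟩,
            invFun := fun σ => ⟨σ.1, σ.2.1⟩,
            left_inv := fun σ => rfl,
            right_inv := fun σ => rfl,
            map_rel_iff' := ?_ }⟩⟩
        intro a b
        constructor
        · rintro ⟨x, hx, y, hy, hs⟩
          have e1 : x = a.1 := by
            rw [cls_of_not_mem (Finset.notMem_empty _)] at hx; simpa using hx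
          have e2 : y = b.1 := by
            rw [cls_of_not_mem (Finset.notMem_empty _)] at hy; simpa using hy
          rw [e1, e2] at hs
          exact hs
        · intro hab
          exact ⟨a.1, self_mem_cls, b.1, self_mem_cls, hab⟩
    | succ n ih =>
        intro A hcard hG
        have hne : A.Nonempty := Finset.card_pos.mp (by omega)
        obtain ⟨p, hpA, hmax⟩ := Finset.exists_max_image A Finset.card hne
        obtain ⟨hpK, hpv, hpw⟩ := hG.mem p hpA
        have hA0card : (A.erase p).card = n := by
          rw [Finset.card_erase_of_mem hpA]; omega
        have hG0 : Good K v w (A.erase p) := by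
          refine ⟨hG.cpx, hG.ne, ?_, ?_⟩
          · intro q hq; exact hG.mem q (Finset.mem_of_mem_erase hq)
          · intro q hq q' hq'K hv' hw' hsub
            have hq' : q' ∈ A := hG.dc q (Finset.mem_of_mem_erase hq) q' hq'K hv' hw' hsub
            refine Finset.mem_erase.mpr ⟨?_, hq'⟩
            intro hc
            rw [hc] at hsub
            have h7 : p = q := Finset.eq_of_subset_of_card_le hsub
              (hmax q (Finset.mem_of_mem_erase hq))
            exact (Finset.mem_erase.mp hq).1 h7.symm
        have hpA0 : p ∉ A.erase p := Finset.notMem_erase p A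
        have hmin : ∀ p' ∈ K, v ∈ p' → w ∈ p' → p' ⊆ p → p' ≠ p → p' ∈ A.erase p := by
          intro p' hp'K hv' hw' hsub hne'
          exact Finset.mem_erase.mpr ⟨hne', hG.dc p hpA p' hp'K hv' hw' hsub⟩
        have hGA' : Good K v w (insert p (A.erase p)) := good_insert hG0 hpK hpv hpw hmin
        have hins : insert p (A.erase p) = A := Finset.insert_erase hpA
        obtain ⟨hmap, P, Q, R, hzip⟩ := elemzip_car hG0 hpK hpv hpw hpA0 hmin hGA'
        have IH := ih (A.erase p) hA0card hG0
        have step1 : @ZipsOnto ↥(Car K v w (A.erase p)) (carPO hG0)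
            ↥(Car K v w (insert p (A.erase p))) (carPO hGA') :=
          @zipsOnto_of_elem _ _ (carPO hG0) (carPO hGA') hmap P Q R hzip
        obtain ⟨e⟩ := carCongr hins hGA' hG
        have step2 : @ZipsOnto ↥(Car K v w (insert p (A.erase p))) (carPO hGA')
            ↥(Car K v w A) (carPO hG) :=
          @zipsOnto_of_iso _ _ (carPO hGA') (carPO hG) e
        exact @zipsOnto_trans _ _ _ _ (carPO hG0) (carPO hG) IH
          (@zipsOnto_trans _ _ _ (carPO hG0) (carPO hGA') (carPO hG) step1 step2)
  have hDfin : {q : Finset V | q ∈ K ∧ v ∈ q ∧ w ∈ q}.Finite :=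
    hK.1.subset (fun q hq => hq.1)
  have hAiff : ∀ q : Finset V, q ∈ hDfin.toFinset ↔ (q ∈ K ∧ v ∈ q ∧ w ∈ q) :=
    fun q => Set.Finite.mem_toFinset hDfin
  have hG : Good K v w hDfin.toFinset :=
    ⟨hK, hvw, fun q hq => (hAiff q).mp hq,
      fun q hq q' h1 h2 h3 _ => (hAiff q').mpr ⟨h1, h2, h3⟩⟩
  have hmain := main hDfin.toFinset.card hDfin.toFinset rfl hG
  obtain ⟨e⟩ := final_iso ⟨hz.1, hz.2.1, hz.2.2.1, hz.2.2.2.1, hz.2.2.2.2.1,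
    hz.2.2.2.2.2.1, hz.2.2.2.2.2.2.1, hz.2.2.2.2.2.2.2.1, hz.2.2.2.2.2.2.2.2⟩ hAiff hG
  exact @zipsOnto_trans ↥K ↥(Car K v w hDfin.toFinset) ↥L _ (carPO hG) _ hmain
    (@zipsOnto_of_iso _ _ (carPO hG) _ e)

end FPZ
end


/-- If a finite abstract simplicial complex `K` edge-zips onto `L`, then the face
poset of `K` (simplices ordered by inclusion) zips onto the face poset of `L`. -/
theorem facePoset_zips_of_edgeZips {V W : Type u} (K : Set (Finset V))
    (L : Set (Finset W)) (hK : IsComplex K) (hL : IsComplex L)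
    (h : EdgeZips V K W L) :
    ZipsOnto (↥K) (↥L) := by
  clear hK hL
  induction h with
  | refl K => exact FPZ.zipsOnto_of_iso (OrderIso.refl _)
  | step hKL φ v w hstep ih => exact FPZ.zipsOnto_trans ih (FPZ.edgeZipStep hstep)
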